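/- arXiv:2304.10272 — 2 statements merged into one kernel-verified Lean document; each statement's English description precedes it below -/
import Mathlib

section
/- For every δ > 0 and integers n, m ≥ 1 there exists a constant c = c(n, m, δ) > 0 with the following property: for every linear map φ : ℝⁿ → ℝᵐ and every Lebesgue measurable set S ⊆ B₁ⁿ(0) with ℒⁿ(S) ≥ δ, one has ∫_S |φ(x)|² dx ≥ c · ‖φ‖²_{op}. -/
open MeasureTheory Metric
open scoped RealInnerProductSpace

lemma slab_vol (n : ℕ) (hn : 1 ≤ n) (e : EuclideanSpace ℝ (Fin n)) (he : ‖e‖ = 1)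
    (t : ℝ) (ht : 0 < t) :
    volume {x : EuclideanSpace ℝ (Fin n) | x ∈ ball (0:EuclideanSpace ℝ (Fin n)) 1 ∧ |⟪x, e⟫| < t}
      ≤ ENNReal.ofReal (2 * t) * ENNReal.ofReal 2 ^ (n - 1) := by
  classical
  set i₀ : Fin n := ⟨0, hn⟩ with hi₀
  set e₀ : EuclideanSpace ℝ (Fin n) := EuclideanSpace.single i₀ (1:ℝ) with he₀def
  have he₀ : ‖e₀‖ = 1 := by simp [he₀def, EuclideanSpace.norm_single]
  set f : EuclideanSpace ℝ (Fin n) ≃ₗᵢ[ℝ] EuclideanSpace ℝ (Fin n) :=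
    Submodule.reflection (ℝ ∙ (e - e₀))ᗮ with hfdef
  have hfe : f e = e₀ := Submodule.reflection_sub (by rw [he, he₀])
  have hcont : Continuous fun y : EuclideanSpace ℝ (Fin n) => |⟪y, e₀⟫| :=
    (Continuous.inner continuous_id continuous_const).abs
  have hmeas : MeasurableSet
      {y : EuclideanSpace ℝ (Fin n) | y ∈ ball (0:EuclideanSpace ℝ (Fin n)) 1 ∧ |⟪y, e₀⟫| < t} :=
    (isOpen_ball.inter (isOpen_lt hcont continuous_const)).measurableSet
  have hpre : {x : EuclideanSpace ℝ (Fin n) | x ∈ ball (0:EuclideanSpace ℝ (Fin n)) 1 ∧ |⟪x, e⟫| < t}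
      = f ⁻¹' {y : EuclideanSpace ℝ (Fin n) | y ∈ ball (0:EuclideanSpace ℝ (Fin n)) 1 ∧ |⟪y, e₀⟫| < t} := by
    ext x
    have h1 : ⟪f x, e₀⟫ = ⟪x, e⟫ := by rw [← hfe, LinearIsometryEquiv.inner_map_map]
    simp only [Set.mem_preimage, Set.mem_setOf_eq, mem_ball, dist_zero_right, h1, f.norm_map]
  rw [hpre, (f.measurePreserving).measure_preimage hmeas.nullMeasurableSet]
  set a : Fin n → ℝ := fun i => if i = i₀ then -t else -1 with ha
  set b : Fin n → ℝ := fun i => if i = i₀ then t else 1 with hb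
  have hsub : {y : EuclideanSpace ℝ (Fin n) | y ∈ ball (0:EuclideanSpace ℝ (Fin n)) 1 ∧ |⟪y, e₀⟫| < t}
      ⊆ (MeasurableEquiv.toLp 2 (Fin n → ℝ)).symm ⁻¹'
        (Set.pi Set.univ (fun i => Set.Ioo (a i) (b i))) := by
    intro y hy
    obtain ⟨hy1, hy2⟩ := hy
    intro i _
    show y i ∈ Set.Ioo (a i) (b i)
    have hcoord : |y i| ≤ ‖y‖ := by
      have h := abs_real_inner_le_norm y (EuclideanSpace.single i (1:ℝ))
      simpa [EuclideanSpace.inner_single_right, EuclideanSpace.norm_single] using h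
    have hy1' : ‖y‖ < 1 := by simpa [dist_zero_right] using hy1
    have hyi0 : ⟪y, e₀⟫ = y i₀ := by simp [he₀def, EuclideanSpace.inner_single_right]
    by_cases hi : i = i₀
    · subst hi
      rw [hyi0] at hy2
      have := abs_lt.mp hy2
      simp only [ha, hb, if_pos rfl, Set.mem_Ioo]
      exact this
    · have := abs_lt.mp (hcoord.trans_lt hy1')
      simp only [ha, hb, if_neg hi, Set.mem_Ioo]
      exact this
  refine (measure_mono hsub).trans ?_
  rw [(EuclideanSpace.volume_preserving_symm_measurableEquiv_toLp (Fin n)).measure_preimage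
    (MeasurableSet.univ_pi (fun i => measurableSet_Ioo)).nullMeasurableSet]
  rw [volume_pi_pi]
  have hv : ∀ i : Fin n, volume (Set.Ioo (a i) (b i))
      = if i = i₀ then ENNReal.ofReal (2*t) else ENNReal.ofReal 2 := by
    intro i
    by_cases hi : i = i₀
    · simp only [ha, hb, if_pos hi, Real.volume_Ioo]
      congr 1
      ring
    · simp only [ha, hb, if_neg hi, Real.volume_Ioo]
      norm_num
  simp_rw [hv]
  rw [← Finset.mul_prod_erase Finset.univ _ (Finset.mem_univ i₀)]
  rw [if_pos rfl]
  have : ∀ i ∈ Finset.univ.erase i₀,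
      (if i = i₀ then ENNReal.ofReal (2*t) else ENNReal.ofReal 2) = ENNReal.ofReal 2 := by
    intro i hi; rw [if_neg (Finset.mem_erase.mp hi).1]
  rw [Finset.prod_congr rfl this, Finset.prod_const]
  have hcard : (Finset.univ.erase i₀).card = n - 1 := by
    rw [Finset.card_erase_of_mem (Finset.mem_univ i₀), Finset.card_univ, Fintype.card_fin]
  rw [hcard]

/-- For every `δ > 0` there is `c = c(n,m,δ) > 0` such that for every linear map
`φ : ℝⁿ → ℝᵐ` and every measurable `S ⊆ B₁ⁿ(0)` with `ℒⁿ(S) ≥ δ`,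
`∫_S |φ(x)|² dx ≥ c ‖φ‖²_op`. -/
theorem stmt_5 (n m : ℕ) (hn : 1 ≤ n) (hm : 1 ≤ m) (δ : ℝ) (hδ : 0 < δ) :
    ∃ c : ℝ, 0 < c ∧
      ∀ (φ : EuclideanSpace ℝ (Fin n) →L[ℝ] EuclideanSpace ℝ (Fin m))
        (S : Set (EuclideanSpace ℝ (Fin n))), MeasurableSet S →
        S ⊆ Metric.ball 0 1 → ENNReal.ofReal δ ≤ MeasureTheory.volume S →
        c * ‖φ‖ ^ 2 ≤ ∫ x in S, ‖φ x‖ ^ 2 := by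
  have h2pos : (0:ℝ) < 2 ^ (n - 1) := by positivity
  set t : ℝ := δ / (4 * 2 ^ (n - 1)) with htdef
  have ht : 0 < t := by positivity
  refine ⟨t ^ 2 * δ / 8, by positivity, ?_⟩
  intro φ S hS hSball hvolS
  have hint : IntegrableOn (fun x => ‖φ x‖ ^ 2) (closedBall (0:EuclideanSpace ℝ (Fin n)) 1) :=
    ((φ.continuous.norm.pow 2).continuousOn).integrableOn_compact (isCompact_closedBall 0 1)
  have hintS : IntegrableOn (fun x => ‖φ x‖ ^ 2) S :=
    hint.mono_set (hSball.trans ball_subset_closedBall)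
  by_cases hφ : ‖φ‖ = 0
  · rw [hφ]
    simpa using setIntegral_nonneg hS (fun x _ => sq_nonneg ‖φ x‖)
  have hφpos : 0 < ‖φ‖ := lt_of_le_of_ne (norm_nonneg φ) (Ne.symm hφ)
  obtain ⟨v, hv1, hv2⟩ := φ.exists_lt_apply_of_lt_opNorm (half_lt_self hφpos)
  have hφv : φ v ≠ 0 := by
    intro h; rw [h, norm_zero] at hv2; linarith
  set w : EuclideanSpace ℝ (Fin m) := ‖φ v‖⁻¹ • φ v with hwdef
  have hw : ‖w‖ = 1 := norm_smul_inv_norm hφv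
  set u : EuclideanSpace ℝ (Fin n) := ContinuousLinearMap.adjoint φ w with hudef
  have hinner : ∀ x, ⟪x, u⟫ = ⟪φ x, w⟫ := fun x => ContinuousLinearMap.adjoint_inner_right φ x w
  have hxu : ∀ x, |⟪x, u⟫| ≤ ‖φ x‖ := fun x => by
    rw [hinner]
    exact (abs_real_inner_le_norm _ _).trans (by rw [hw, mul_one])
  have hvu : ‖φ‖ / 2 < ⟪v, u⟫ := by
    rw [hinner, hwdef, real_inner_smul_right, real_inner_self_eq_norm_sq]
    have hφvn : (0:ℝ) < ‖φ v‖ := norm_pos_iff.mpr hφv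
    calc ‖φ‖ / 2 < ‖φ v‖ := hv2
      _ = ‖φ v‖⁻¹ * ‖φ v‖ ^ 2 := by field_simp
  have hunorm : ‖φ‖ / 2 < ‖u‖ := by
    refine hvu.trans_le ((real_inner_le_norm v u).trans ?_)
    nlinarith [norm_nonneg u, hv1.le]
  have hu0 : u ≠ 0 := by
    intro h; rw [h, norm_zero] at hunorm; linarith
  set e : EuclideanSpace ℝ (Fin n) := ‖u‖⁻¹ • u with hedef
  have henorm : ‖e‖ = 1 := norm_smul_inv_norm hu0
  set B := {x : EuclideanSpace ℝ (Fin n) | x ∈ ball (0:EuclideanSpace ℝ (Fin n)) 1 ∧ |⟪x, e⟫| < t}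
    with hBdef
  have hBmeas : MeasurableSet B := by
    apply IsOpen.measurableSet
    have hBeq : B = ball (0:EuclideanSpace ℝ (Fin n)) 1 ∩ {x | |⟪x, e⟫| < t} := rfl
    rw [hBeq]
    exact isOpen_ball.inter (isOpen_lt ((continuous_id.inner continuous_const).abs) continuous_const)
  have hBvol : volume B ≤ ENNReal.ofReal (δ / 2) := by
    refine (slab_vol n hn e henorm t ht).trans_eq ?_
    rw [← ENNReal.ofReal_pow (by norm_num : (0:ℝ) ≤ 2),
      ← ENNReal.ofReal_mul (by positivity)]
    congr 1
    rw [htdef]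
    field_simp
    ring
  set T := S \ B with hTdef
  have hTmeas : MeasurableSet T := hS.diff hBmeas
  have hST : S ⊆ T ∪ B := fun x hx => by
    by_cases hxB : x ∈ B
    · exact Or.inr hxB
    · exact Or.inl ⟨hx, hxB⟩
  have hkey : ENNReal.ofReal δ ≤ volume T + ENNReal.ofReal (δ / 2) :=
    hvolS.trans ((measure_mono hST).trans ((measure_union_le _ _).trans
      (add_le_add_right hBvol _)))
  have hTvol : ENNReal.ofReal (δ / 2) ≤ volume T := by
    have hδ2 : ENNReal.ofReal δ = ENNReal.ofReal (δ / 2) + ENNReal.ofReal (δ / 2) := by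
      rw [← ENNReal.ofReal_add (by positivity) (by positivity)]; norm_num
    rw [hδ2] at hkey
    exact (ENNReal.add_le_add_iff_right ENNReal.ofReal_ne_top).mp hkey
  have hTfin : volume T ≠ ⊤ :=
    ((measure_mono ((Set.diff_subset).trans hSball)).trans_lt measure_ball_lt_top).ne
  have hTreal : δ / 2 ≤ (volume T).toReal := by
    have := ENNReal.toReal_mono hTfin hTvol
    rwa [ENNReal.toReal_ofReal (by positivity)] at this
  have hlow : ∀ x ∈ T, (t * (‖φ‖ / 2)) ^ 2 ≤ ‖φ x‖ ^ 2 := by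
    intro x hx
    obtain ⟨hxS, hxB⟩ := hx
    have hxball : x ∈ ball (0:EuclideanSpace ℝ (Fin n)) 1 := hSball hxS
    have hte : t ≤ |⟪x, e⟫| := by
      by_contra h
      exact hxB ⟨hxball, not_le.mp h⟩
    have hxue : ⟪x, u⟫ = ‖u‖ * ⟪x, e⟫ := by
      rw [hedef, real_inner_smul_right]
      have : ‖u‖ ≠ 0 := norm_ne_zero_iff.mpr hu0
      field_simp
    have h1 : t * (‖φ‖ / 2) ≤ ‖φ x‖ := by
      have h2 : ‖φ‖ / 2 * t ≤ ‖u‖ * |⟪x, e⟫| := mul_le_mul hunorm.le hte ht.le (norm_nonneg u)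
      have h3 : ‖u‖ * |⟪x, e⟫| = |⟪x, u⟫| := by
        rw [hxue, abs_mul, abs_of_nonneg (norm_nonneg u)]
      calc t * (‖φ‖ / 2) = ‖φ‖ / 2 * t := by ring
        _ ≤ ‖u‖ * |⟪x, e⟫| := h2
        _ = |⟪x, u⟫| := h3
        _ ≤ ‖φ x‖ := hxu x
    have hpos : 0 ≤ t * (‖φ‖ / 2) := by positivity
    exact pow_le_pow_left₀ hpos h1 2
  calc t ^ 2 * δ / 8 * ‖φ‖ ^ 2 = (t * (‖φ‖ / 2)) ^ 2 * (δ / 2) := by ring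
    _ ≤ (t * (‖φ‖ / 2)) ^ 2 * (volume T).toReal :=
        mul_le_mul_of_nonneg_left hTreal (by positivity)
    _ ≤ ∫ x in T, ‖φ x‖ ^ 2 :=
        by have := setIntegral_ge_of_const_le hTmeas hTfin hlow (hintS.mono_set Set.diff_subset)
           rw [smul_eq_mul, measureReal_def, mul_comm] at this; exact this
    _ ≤ ∫ x in S, ‖φ x‖ ^ 2 :=
        setIntegral_mono_set hintS
          (Filter.Eventually.of_forall (fun x => sq_nonneg ‖φ x‖))
          (HasSubset.Subset.eventuallyLE Set.diff_subset)
end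

section
/- There is a constant C = C(n) ∈ (0, ∞) with the following property. Let m ≥ 1, let w : B̄_{1/2}(0) \ {0} → ℝᵐ be a C¹ function on the punctured closed half-ball in ℝⁿ, and let ψ : ℝⁿ → ℝᵐ be continuous and positively homogeneous of degree 1 (ψ(tx) = t ψ(x) for t > 0). Then ∫_{B_{1/2}(0)} |w − ψ|² ≤ C ∫_{B_{1/4}(0)} |w − ψ|² + C ∫_{B_{1/2}(0) \ B_{1/8}(0)} |∂_R (w/R)|², where R(x) = |x| and ∂_R denotes the radial derivative. -/
open Metric

open MeasureTheory Set ENNReal Filter in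
private lemma stmt12_measurable_indicator_of_continuousOn
    {α : Type*} [TopologicalSpace α] [MeasurableSpace α] [OpensMeasurableSpace α]
    {f : α → ℝ≥0∞} {U : Set α} (hU : IsOpen U) (hf : ContinuousOn f U) :
    Measurable (U.indicator f) := by
  apply measurable_of_isOpen
  intro s hs
  by_cases h0 : (0 : ℝ≥0∞) ∈ s
  · have he : U.indicator f ⁻¹' s = (U ∩ f ⁻¹' s) ∪ Uᶜ := by
      ext x
      by_cases hx : x ∈ U <;>
        simp [Set.indicator_of_mem, Set.indicator_of_notMem, hx, h0]
    rw [he]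
    exact ((hf.isOpen_inter_preimage hU hs).measurableSet).union hU.measurableSet.compl
  · have he : U.indicator f ⁻¹' s = U ∩ f ⁻¹' s := by
      ext x
      by_cases hx : x ∈ U <;>
        simp [Set.indicator_of_mem, Set.indicator_of_notMem, hx, h0]
    rw [he]
    exact (hf.isOpen_inter_preimage hU hs).measurableSet

open MeasureTheory Set ENNReal Filter in
private lemma stmt12_lint_comp_smul
    {E : Type*} [NormedAddCommGroup E] [NormedSpace ℝ E] [MeasurableSpace E]
    [BorelSpace E] [FiniteDimensional ℝ E]
    (μ : Measure E) [μ.IsAddHaarMeasure] {f : E → ℝ≥0∞}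
    (hf : Measurable f) {r : ℝ} (hr : r ≠ 0) :
    ∫⁻ x, f (r • x) ∂μ
      = ENNReal.ofReal |(r ^ Module.finrank ℝ E)⁻¹| * ∫⁻ x, f x ∂μ := by
  rw [← lintegral_map hf (continuous_const_smul r).measurable,
    Measure.map_addHaar_smul μ hr, lintegral_smul_measure, smul_eq_mul]

open MeasureTheory Set ENNReal Filter in
private lemma stmt12_setLint_comp_smul
    {E : Type*} [NormedAddCommGroup E] [NormedSpace ℝ E] [MeasurableSpace E]
    [BorelSpace E] [FiniteDimensional ℝ E]
    (μ : Measure E) [μ.IsAddHaarMeasure] {f : E → ℝ≥0∞}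
    (hf : Measurable f) {r : ℝ} (hr : r ≠ 0) {S : Set E} (hS : MeasurableSet S) :
    ∫⁻ x in (fun x => r • x) ⁻¹' S, f (r • x) ∂μ
      = ENNReal.ofReal |(r ^ Module.finrank ℝ E)⁻¹| * ∫⁻ x in S, f x ∂μ := by
  have hSpre : MeasurableSet ((fun x : E => r • x) ⁻¹' S) :=
    hS.preimage (continuous_const_smul r).measurable
  rw [← lintegral_indicator hSpre, ← lintegral_indicator hS]
  have he : ((fun x : E => r • x) ⁻¹' S).indicator (fun x => f (r • x))
      = fun x => S.indicator f (r • x) := by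
    funext x
    by_cases h : r • x ∈ S <;>
      simp [Set.indicator_of_mem, Set.indicator_of_notMem, h, Set.mem_preimage]
  rw [he, stmt12_lint_comp_smul μ (hf.indicator hS) hr]

open MeasureTheory Set ENNReal Filter in
private lemma stmt12_lintegral_sq_le {a b : ℝ} {g : ℝ → ℝ≥0∞}
    (hg : AEMeasurable g (volume.restrict (Set.Ioc a b))) :
    (∫⁻ t in Set.Ioc a b, g t) ^ 2
      ≤ volume (Set.Ioc a b) * ∫⁻ t in Set.Ioc a b, g t ^ 2 := by
  set μ := volume.restrict (Set.Ioc a b) with hμ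
  have hpq : (2 : ℝ).HolderConjugate 2 := Real.HolderConjugate.two_two
  have h := ENNReal.lintegral_mul_le_Lp_mul_Lq μ hpq aemeasurable_const hg (f := fun _ => 1)
  simp only [Pi.mul_apply, one_mul, ENNReal.one_rpow] at h
  have h1 : (∫⁻ _, (1 : ℝ≥0∞) ∂μ) = volume (Set.Ioc a b) := by
    rw [lintegral_one, hμ, Measure.restrict_apply_univ]
  rw [h1] at h
  have h2 : (∫⁻ t, g t ∂μ) ^ 2
      ≤ (volume (Set.Ioc a b) ^ (1/2 : ℝ) * (∫⁻ t, g t ^ (2:ℝ) ∂μ) ^ (1/2 : ℝ)) ^ 2 := by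
    rw [sq, sq]; exact mul_le_mul' h h
  have h3 : ∀ x : ℝ≥0∞, (x ^ (1/2 : ℝ)) ^ (2:ℕ) = x := by
    intro x
    rw [← ENNReal.rpow_natCast (x ^ (1/2:ℝ)) 2, ← ENNReal.rpow_mul]
    norm_num
  calc (∫⁻ t in Set.Ioc a b, g t) ^ 2
      ≤ (volume (Set.Ioc a b) ^ (1/2 : ℝ) * (∫⁻ t, g t ^ (2:ℝ) ∂μ) ^ (1/2 : ℝ)) ^ 2 := h2
    _ = volume (Set.Ioc a b) * ∫⁻ t, g t ^ (2:ℝ) ∂μ := by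
        rw [mul_pow, h3, h3]
    _ = volume (Set.Ioc a b) * ∫⁻ t in Set.Ioc a b, g t ^ 2 := by
        congr 1
        refine lintegral_congr fun t => ?_
        rw [show ((2:ℝ)) = ((2:ℕ):ℝ) by norm_num, ENNReal.rpow_natCast]

open MeasureTheory Set ENNReal Filter Topology
set_option maxHeartbeats 1000000

/-- There is `C = C(n)` such that for every `C¹` function `w` on the punctured closed
half-ball `B̄_{1/2}(0) \ {0}` and every continuous positively 1-homogeneous `ψ`,
`∫_{B_{1/2}} |w − ψ|² ≤ C ∫_{B_{1/4}} |w − ψ|² + C ∫_{B_{1/2} \ B_{1/8}} |∂_R(w/R)|²`,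
where `∂_R(w/R)(x) = (d/dt)|_{t=|x|} (w(t x/|x|)/t)`. -/
theorem stmt_12 (n : ℕ) (hn : 1 ≤ n) :
    ∃ C : ℝ, 0 < C ∧
      ∀ (m : ℕ) (w ψ : EuclideanSpace ℝ (Fin n) → EuclideanSpace ℝ (Fin m)),
        ContDiffOn ℝ 1 w (closedBall 0 (1/2) \ {0}) →
        Continuous ψ →
        (∀ t : ℝ, 0 < t → ∀ x, ψ (t • x) = t • ψ x) →
        (∫ x in ball (0 : EuclideanSpace ℝ (Fin n)) (1/2), ‖w x - ψ x‖ ^ 2) ≤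
          C * (∫ x in ball (0 : EuclideanSpace ℝ (Fin n)) (1/4), ‖w x - ψ x‖ ^ 2) +
          C * ∫ x in ball (0 : EuclideanSpace ℝ (Fin n)) (1/2) \ ball 0 (1/8),
            norm (deriv (fun t : ℝ => t⁻¹ • w (t • (‖x‖⁻¹ • x))) ‖x‖) ^ 2 := by
  classical
  refine ⟨2 ^ (n + 3) + 1, by positivity, ?_⟩
  intro m w ψ hw hψc hψ
  haveI : Nontrivial (EuclideanSpace ℝ (Fin n)) := by
    refine ⟨EuclideanSpace.single (⟨0, hn⟩ : Fin n) (1:ℝ), 0, fun h => ?_⟩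
    have := congrArg (fun f : EuclideanSpace ℝ (Fin n) => f ⟨0, hn⟩) h
    simp [EuclideanSpace.single_apply] at this
  -- basic sets
  set U : Set (EuclideanSpace ℝ (Fin n)) := ball 0 (1/2) \ {0} with hUdef
  have hUopen : IsOpen U := isOpen_ball.sdiff isClosed_singleton
  have hUsub : U ⊆ closedBall 0 (1/2) \ {0} :=
    diff_subset_diff_left ball_subset_closedBall
  have hwU : ContDiffOn ℝ 1 w U := hw.mono hUsub
  have hwc : ContinuousOn w U := hwU.continuousOn
  have hfd : ContinuousOn (fderiv ℝ w) U :=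
    hwU.continuousOn_fderiv_of_isOpen hUopen le_rfl
  have hdiff : ∀ y ∈ U, DifferentiableAt ℝ w y := fun y hy =>
    (hwU.differentiableOn one_ne_zero).differentiableAt (hUopen.mem_nhds hy)
  have memU : ∀ y : EuclideanSpace ℝ (Fin n), y ≠ 0 → ‖y‖ < 1/2 → y ∈ U :=
    fun y h1 h2 => ⟨mem_ball_zero_iff.2 h2, h1⟩
  set G : EuclideanSpace ℝ (Fin n) → EuclideanSpace ℝ (Fin m) :=
    fun y => (‖y‖ ^ 2)⁻¹ • ((fderiv ℝ w y) y - w y) with hGdef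
  have hGc : ContinuousOn G U := by
    apply ContinuousOn.fun_smul
    · refine ((continuous_norm.continuousOn (s := U)).pow 2).inv₀ ?_
      intro y hy
      have : y ≠ 0 := hy.2
      exact pow_ne_zero 2 (norm_ne_zero_iff.2 this)
    · exact (hfd.clm_apply continuousOn_id).sub hwc
  -- master derivative computation
  have master : ∀ (z : EuclideanSpace ℝ (Fin n)) (u : ℝ), u • z ∈ U → 0 < u →
      HasDerivAt (fun t : ℝ => t⁻¹ • w (t • z))
        (u⁻¹ • (fderiv ℝ w (u • z)) z - (u^2)⁻¹ • w (u • z)) u := by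
    intro z u hz hu
    have h1 : HasDerivAt (fun t : ℝ => t • z) z u := by
      simpa using (hasDerivAt_id u).smul_const z
    have h2 : HasDerivAt (fun t : ℝ => w (t • z)) ((fderiv ℝ w (u • z)) z) u :=
      ((hdiff _ hz).hasFDerivAt).comp_hasDerivAt u h1
    have h3 : HasDerivAt (fun t : ℝ => t⁻¹) (-(u^2)⁻¹) u := hasDerivAt_inv hu.ne'
    have h4 := h3.fun_smul h2
    rw [sub_eq_add_neg, ← neg_smul]
    exact h4
  have hGderiv : ∀ y ∈ U,
      HasDerivAt (fun t : ℝ => t⁻¹ • w (t • (‖y‖⁻¹ • y))) (G y) ‖y‖ := by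
    intro y hy
    have hy0 : y ≠ 0 := hy.2
    have hny : ‖y‖ ≠ 0 := norm_ne_zero_iff.2 hy0
    have hz : ‖y‖ • (‖y‖⁻¹ • y) ∈ U := by
      rw [smul_inv_smul₀ hny]; exact hy
    have h := master (‖y‖⁻¹ • y) ‖y‖ hz (norm_pos_iff.2 hy0)
    rw [smul_inv_smul₀ hny] at h
    convert h using 1
    rw [ContinuousLinearMap.map_smul]
    show (‖y‖ ^ 2)⁻¹ • ((fderiv ℝ w y) y - w y)
      = ‖y‖⁻¹ • ‖y‖⁻¹ • (fderiv ℝ w y) y - (‖y‖ ^ 2)⁻¹ • w y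
    rw [smul_sub, smul_smul, sq, mul_inv]
  have hBderiv : ∀ x ∈ ball (0 : EuclideanSpace ℝ (Fin n)) (1/2) \ ball 0 (1/4),
      ∀ t ∈ Set.Icc (2⁻¹:ℝ) 1,
      HasDerivAt (fun s : ℝ => s⁻¹ • w (s • x)) (‖x‖^2 • G (t • x)) t := by
    intro x hx t ht
    have hx2 : ‖x‖ < 1/2 := mem_ball_zero_iff.1 hx.1
    have hx4 : 1/4 ≤ ‖x‖ := not_lt.1 (fun h => hx.2 (mem_ball_zero_iff.2 h))
    have hx0 : x ≠ 0 := fun h => by simp [h] at hx4; norm_num at hx4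
    have ht0 : (0:ℝ) < t := lt_of_lt_of_le (by norm_num) ht.1
    have htx : t • x ∈ U := by
      refine memU _ (smul_ne_zero ht0.ne' hx0) ?_
      rw [norm_smul, Real.norm_eq_abs, abs_of_pos ht0]
      nlinarith [ht.2, norm_nonneg x]
    have h := master x t htx ht0
    convert h using 1
    have hLx : (fderiv ℝ w (t • x)) (t • x) = t • (fderiv ℝ w (t • x)) x :=
      ContinuousLinearMap.map_smul _ _ _
    have hnx : ‖t • x‖ ^ 2 = t^2 * ‖x‖^2 := by
      rw [norm_smul, Real.norm_eq_abs, abs_of_pos ht0]; ring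
    show ‖x‖^2 • (‖t • x‖ ^ 2)⁻¹ • ((fderiv ℝ w (t • x)) (t • x) - w (t • x)) = _
    rw [hnx, hLx]
    have hxn : ‖x‖ ≠ 0 := norm_ne_zero_iff.2 hx0
    match_scalars <;> field_simp <;> ring
  -- pointwise real inequality on the outer annulus
  have hpt : ∀ x ∈ ball (0 : EuclideanSpace ℝ (Fin n)) (1/2) \ ball 0 (1/4),
      ‖w x - ψ x‖^2 ≤ 8 * ‖w (((2:ℝ)⁻¹) • x) - ψ (((2:ℝ)⁻¹) • x)‖^2
        + 2 * (∫ t in (2⁻¹:ℝ)..1, ‖‖x‖^2 • G (t • x)‖)^2 := by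
    intro x hx
    have hx2 : ‖x‖ < 1/2 := mem_ball_zero_iff.1 hx.1
    have hx4 : 1/4 ≤ ‖x‖ := not_lt.1 (fun h => hx.2 (mem_ball_zero_iff.2 h))
    have hx0 : x ≠ 0 := fun h => by simp [h] at hx4; norm_num at hx4
    have hmaps : Set.MapsTo (fun t : ℝ => t • x) (Set.Icc (2⁻¹:ℝ) 1) U := by
      intro t ht
      have ht0 : (0:ℝ) < t := lt_of_lt_of_le (by norm_num) ht.1
      refine memU _ (smul_ne_zero ht0.ne' hx0) ?_
      rw [norm_smul, Real.norm_eq_abs, abs_of_pos ht0]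
      nlinarith [ht.2, norm_nonneg x]
    have hconth : ContinuousOn (fun t : ℝ => ‖x‖^2 • G (t • x)) (Set.Icc (2⁻¹:ℝ) 1) :=
      continuousOn_const.fun_smul
        (hGc.comp (continuous_id.smul continuous_const).continuousOn hmaps)
    have hint : IntervalIntegrable (fun t : ℝ => ‖x‖^2 • G (t • x)) volume 2⁻¹ 1 := by
      apply ContinuousOn.intervalIntegrable
      rwa [uIcc_of_le (by norm_num : (2⁻¹:ℝ) ≤ 1)]
    have hFTC := intervalIntegral.integral_eq_sub_of_hasDerivAt
      (f := fun s : ℝ => s⁻¹ • w (s • x)) (f' := fun t => ‖x‖^2 • G (t • x))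
      (by rw [uIcc_of_le (by norm_num : (2⁻¹:ℝ) ≤ 1)]; exact fun t ht => hBderiv x hx t ht)
      hint
    have hψx : ψ x = (2:ℝ) • ψ (((2:ℝ)⁻¹) • x) := by
      rw [← hψ 2 (by norm_num) (((2:ℝ)⁻¹) • x), smul_inv_smul₀ (by norm_num : (2:ℝ) ≠ 0)]
    simp only [inv_one, one_smul, inv_inv] at hFTC
    have hkey : w x - ψ x = ((2:ℝ) • (w (((2:ℝ)⁻¹) • x) - ψ (((2:ℝ)⁻¹) • x)))
        + ∫ t in (2⁻¹:ℝ)..1, ‖x‖^2 • G (t • x) := by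
      rw [hFTC, smul_sub, hψx]
      abel
    have h1 : ‖w x - ψ x‖ ≤ 2 * ‖w (((2:ℝ)⁻¹) • x) - ψ (((2:ℝ)⁻¹) • x)‖
        + ∫ t in (2⁻¹:ℝ)..1, ‖‖x‖^2 • G (t • x)‖ := by
      rw [hkey]
      refine (norm_add_le _ _).trans (add_le_add ?_ ?_)
      · rw [norm_smul, Real.norm_eq_abs]
        norm_num
      · exact intervalIntegral.norm_integral_le_integral_norm (by norm_num)
    have h2 : 0 ≤ ∫ t in (2⁻¹:ℝ)..1, ‖‖x‖^2 • G (t • x)‖ :=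
      intervalIntegral.integral_nonneg (by norm_num) (fun t _ => norm_nonneg _)
    nlinarith [norm_nonneg (w x - ψ x), norm_nonneg (w (((2:ℝ)⁻¹) • x) - ψ (((2:ℝ)⁻¹) • x)),
      sq_nonneg (2 * ‖w (((2:ℝ)⁻¹) • x) - ψ (((2:ℝ)⁻¹) • x)‖
        - (∫ t in (2⁻¹:ℝ)..1, ‖‖x‖^2 • G (t • x)‖))]
  -- measurable surrogates
  set Pb : EuclideanSpace ℝ (Fin n) → ℝ≥0∞ :=
    U.indicator (fun y => ENNReal.ofReal (‖w y - ψ y‖^2)) with hPbdef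
  have hPbmeas : Measurable Pb := by
    refine stmt12_measurable_indicator_of_continuousOn hUopen ?_
    exact ENNReal.continuous_ofReal.comp_continuousOn
      (((hwc.sub hψc.continuousOn).norm.pow 2))
  set Qb : EuclideanSpace ℝ (Fin n) → ℝ≥0∞ :=
    U.indicator (fun y => ENNReal.ofReal (‖G y‖^2)) with hQbdef
  have hQbmeas : Measurable Qb := by
    refine stmt12_measurable_indicator_of_continuousOn hUopen ?_
    exact ENNReal.continuous_ofReal.comp_continuousOn ((hGc.norm.pow 2))
  -- pointwise ENNReal inequality
  have hptE : ∀ x ∈ ball (0 : EuclideanSpace ℝ (Fin n)) (1/2) \ ball 0 (1/4),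
      Pb x ≤ ENNReal.ofReal 8 * Pb (((2:ℝ)⁻¹) • x)
        + ENNReal.ofReal ((16:ℝ)⁻¹) * ∫⁻ t in Set.Ioc (2⁻¹:ℝ) 1, Qb (t • x) := by
    intro x hx
    have hx2 : ‖x‖ < 1/2 := mem_ball_zero_iff.1 hx.1
    have hx4 : 1/4 ≤ ‖x‖ := not_lt.1 (fun h => hx.2 (mem_ball_zero_iff.2 h))
    have hx0 : x ≠ 0 := fun h => by simp [h] at hx4; norm_num at hx4
    have hxU : x ∈ U := memU _ hx0 hx2
    have hhalfU : ((2:ℝ)⁻¹) • x ∈ U := by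
      refine memU _ (smul_ne_zero (by norm_num) hx0) ?_
      rw [norm_smul, Real.norm_eq_abs]
      rw [abs_of_pos (by norm_num : (0:ℝ) < 2⁻¹)]
      nlinarith
    have htU : ∀ t ∈ Set.Ioc (2⁻¹:ℝ) 1, t • x ∈ U := by
      intro t ht
      have ht0 : (0:ℝ) < t := lt_trans (by norm_num) ht.1
      refine memU _ (smul_ne_zero ht0.ne' hx0) ?_
      rw [norm_smul, Real.norm_eq_abs, abs_of_pos ht0]
      nlinarith [ht.2, norm_nonneg x]
    have hPx : Pb x = ENNReal.ofReal (‖w x - ψ x‖^2) := Set.indicator_of_mem hxU _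
    have hPh : Pb (((2:ℝ)⁻¹) • x)
        = ENNReal.ofReal (‖w (((2:ℝ)⁻¹) • x) - ψ (((2:ℝ)⁻¹) • x)‖^2) :=
      Set.indicator_of_mem hhalfU _
    set q : ℝ := ∫ t in (2⁻¹:ℝ)..1, ‖‖x‖^2 • G (t • x)‖ with hqdef
    have hq0 : 0 ≤ q :=
      intervalIntegral.integral_nonneg (by norm_num) (fun t _ => norm_nonneg _)
    have e1 : Pb x ≤ ENNReal.ofReal (8 * ‖w (((2:ℝ)⁻¹) • x) - ψ (((2:ℝ)⁻¹) • x)‖^2)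
        + ENNReal.ofReal (2 * q^2) := by
      rw [hPx, ← ENNReal.ofReal_add (by positivity) (by positivity)]
      exact ENNReal.ofReal_le_ofReal (hpt x hx)
    -- continuity of the integrand in t
    have hmaps : Set.MapsTo (fun t : ℝ => t • x) (Set.Icc (2⁻¹:ℝ) 1) U := by
      intro t ht
      have ht0 : (0:ℝ) < t := lt_of_lt_of_le (by norm_num) ht.1
      refine memU _ (smul_ne_zero ht0.ne' hx0) ?_
      rw [norm_smul, Real.norm_eq_abs, abs_of_pos ht0]
      nlinarith [ht.2, norm_nonneg x]
    have hconth : ContinuousOn (fun t : ℝ => ‖‖x‖^2 • G (t • x)‖) (Set.Icc (2⁻¹:ℝ) 1) :=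
      (continuousOn_const.fun_smul
        (hGc.comp (continuous_id.smul continuous_const).continuousOn hmaps)).norm
    have hIoc : IntegrableOn (fun t : ℝ => ‖‖x‖^2 • G (t • x)‖) (Set.Ioc (2⁻¹:ℝ) 1)
        volume :=
      (hconth.integrableOn_Icc).mono_set Set.Ioc_subset_Icc_self
    have e2 : ENNReal.ofReal q
        = ∫⁻ t in Set.Ioc (2⁻¹:ℝ) 1, ENNReal.ofReal ‖‖x‖^2 • G (t • x)‖ := by
      rw [hqdef, intervalIntegral.integral_of_le (by norm_num : (2⁻¹:ℝ) ≤ 1)]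
      exact MeasureTheory.ofReal_integral_eq_lintegral_ofReal hIoc
        (Filter.Eventually.of_forall fun t => norm_nonneg _)
    have e3 : (∫⁻ t in Set.Ioc (2⁻¹:ℝ) 1, ENNReal.ofReal ‖‖x‖^2 • G (t • x)‖) ^ 2
        ≤ volume (Set.Ioc (2⁻¹:ℝ) 1)
          * ∫⁻ t in Set.Ioc (2⁻¹:ℝ) 1, (ENNReal.ofReal ‖‖x‖^2 • G (t • x)‖) ^ 2 :=
      stmt12_lintegral_sq_le
        ((ENNReal.continuous_ofReal.comp_continuousOn
          (hconth.mono Set.Ioc_subset_Icc_self)).aemeasurable measurableSet_Ioc)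
    have hvol : volume (Set.Ioc (2⁻¹:ℝ) 1) = ENNReal.ofReal (2⁻¹:ℝ) := by
      rw [Real.volume_Ioc]; norm_num
    have e4 : ∀ t ∈ Set.Ioc (2⁻¹:ℝ) 1,
        (ENNReal.ofReal ‖‖x‖^2 • G (t • x)‖) ^ 2
          ≤ ENNReal.ofReal ((16:ℝ)⁻¹) * Qb (t • x) := by
      intro t ht
      have hQt : Qb (t • x) = ENNReal.ofReal (‖G (t • x)‖^2) :=
        Set.indicator_of_mem (htU t ht) _
      rw [hQt, ← ENNReal.ofReal_pow (norm_nonneg _),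
        ← ENNReal.ofReal_mul (by norm_num)]
      apply ENNReal.ofReal_le_ofReal
      have hns : ‖‖x‖^2 • G (t • x)‖ = ‖x‖^2 * ‖G (t • x)‖ := by
        rw [norm_smul, Real.norm_eq_abs, abs_of_nonneg (by positivity)]
      rw [hns]
      have hb : (‖x‖^2)^2 ≤ (16:ℝ)⁻¹ := by
        have h1 : ‖x‖^2 ≤ (4:ℝ)⁻¹ := by nlinarith [norm_nonneg x]
        nlinarith [sq_nonneg (‖x‖^2), norm_nonneg x]
      nlinarith [norm_nonneg (G (t • x)), sq_nonneg (‖G (t • x)‖), norm_nonneg x,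
        sq_nonneg (‖x‖^2 * ‖G (t • x)‖)]
    have e5 : ENNReal.ofReal (2 * q^2)
        ≤ ENNReal.ofReal ((16:ℝ)⁻¹) * ∫⁻ t in Set.Ioc (2⁻¹:ℝ) 1, Qb (t • x) := by
      rw [ENNReal.ofReal_mul (by norm_num : (0:ℝ) ≤ 2), ENNReal.ofReal_pow hq0]
      calc ENNReal.ofReal 2 * ENNReal.ofReal q ^ 2
          ≤ ENNReal.ofReal 2 * (volume (Set.Ioc (2⁻¹:ℝ) 1)
            * ∫⁻ t in Set.Ioc (2⁻¹:ℝ) 1, (ENNReal.ofReal ‖‖x‖^2 • G (t • x)‖) ^ 2) := by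
            rw [e2]; exact mul_le_mul_right e3 _
        _ = (ENNReal.ofReal 2 * ENNReal.ofReal (2⁻¹:ℝ))
            * ∫⁻ t in Set.Ioc (2⁻¹:ℝ) 1, (ENNReal.ofReal ‖‖x‖^2 • G (t • x)‖) ^ 2 := by
            rw [hvol]; ring
        _ = ∫⁻ t in Set.Ioc (2⁻¹:ℝ) 1, (ENNReal.ofReal ‖‖x‖^2 • G (t • x)‖) ^ 2 := by
            rw [← ENNReal.ofReal_mul (by norm_num : (0:ℝ) ≤ 2)]
            norm_num
        _ ≤ ∫⁻ t in Set.Ioc (2⁻¹:ℝ) 1, ENNReal.ofReal ((16:ℝ)⁻¹) * Qb (t • x) := by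
            refine lintegral_mono_ae ?_
            rw [ae_restrict_iff' measurableSet_Ioc]
            exact Filter.Eventually.of_forall e4
        _ = ENNReal.ofReal ((16:ℝ)⁻¹) * ∫⁻ t in Set.Ioc (2⁻¹:ℝ) 1, Qb (t • x) :=
            lintegral_const_mul' _ _ ENNReal.ofReal_ne_top
    calc Pb x ≤ ENNReal.ofReal (8 * ‖w (((2:ℝ)⁻¹) • x) - ψ (((2:ℝ)⁻¹) • x)‖^2)
        + ENNReal.ofReal (2 * q^2) := e1
      _ ≤ ENNReal.ofReal 8 * Pb (((2:ℝ)⁻¹) • x)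
          + ENNReal.ofReal ((16:ℝ)⁻¹) * ∫⁻ t in Set.Ioc (2⁻¹:ℝ) 1, Qb (t • x) := by
          refine add_le_add ?_ e5
          rw [hPh, ← ENNReal.ofReal_mul (by norm_num : (0:ℝ) ≤ 8)]
  -- main lintegral estimate
  have hmain : (∫⁻ x in ball (0 : EuclideanSpace ℝ (Fin n)) (1/2), Pb x)
      ≤ ENNReal.ofReal (2 ^ (n + 3) + 1)
          * (∫⁻ x in ball (0 : EuclideanSpace ℝ (Fin n)) (1/4), Pb x)
        + ENNReal.ofReal (2 ^ (n + 3) + 1)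
          * (∫⁻ y in ball (0 : EuclideanSpace ℝ (Fin n)) (1/2) \ ball 0 (1/8), Qb y) := by
    have msA2 : MeasurableSet (ball (0 : EuclideanSpace ℝ (Fin n)) (1/2) \ ball 0 (1/4)) :=
      measurableSet_ball.diff measurableSet_ball
    have msD48 : MeasurableSet (ball (0 : EuclideanSpace ℝ (Fin n)) (1/4) \ ball 0 (1/8)) :=
      measurableSet_ball.diff measurableSet_ball
    have hsplit : (∫⁻ x in ball (0 : EuclideanSpace ℝ (Fin n)) (1/2), Pb x)
        = (∫⁻ x in ball (0 : EuclideanSpace ℝ (Fin n)) (1/4), Pb x)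
          + ∫⁻ x in ball (0 : EuclideanSpace ℝ (Fin n)) (1/2) \ ball 0 (1/4), Pb x := by
      rw [← lintegral_union msA2 disjoint_sdiff_right,
        union_diff_cancel (ball_subset_ball (by norm_num))]
    have hf1meas : Measurable fun x : EuclideanSpace ℝ (Fin n) =>
        ENNReal.ofReal 8 * Pb (((2:ℝ)⁻¹) • x) :=
      (hPbmeas.comp (continuous_const_smul ((2:ℝ)⁻¹)).measurable).const_mul _
    have hstep1 : (∫⁻ x in ball (0 : EuclideanSpace ℝ (Fin n)) (1/2) \ ball 0 (1/4), Pb x)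
        ≤ ENNReal.ofReal 8
            * (∫⁻ x in ball (0 : EuclideanSpace ℝ (Fin n)) (1/2) \ ball 0 (1/4),
                Pb (((2:ℝ)⁻¹) • x))
          + ENNReal.ofReal ((16:ℝ)⁻¹)
            * (∫⁻ x in ball (0 : EuclideanSpace ℝ (Fin n)) (1/2) \ ball 0 (1/4),
                ∫⁻ t in Set.Ioc (2⁻¹:ℝ) 1, Qb (t • x)) := by
      calc (∫⁻ x in ball (0 : EuclideanSpace ℝ (Fin n)) (1/2) \ ball 0 (1/4), Pb x)
          ≤ ∫⁻ x in ball (0 : EuclideanSpace ℝ (Fin n)) (1/2) \ ball 0 (1/4),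
              (ENNReal.ofReal 8 * Pb (((2:ℝ)⁻¹) • x)
                + ENNReal.ofReal ((16:ℝ)⁻¹) * ∫⁻ t in Set.Ioc (2⁻¹:ℝ) 1, Qb (t • x)) :=
            lintegral_mono_ae ((ae_restrict_iff' msA2).2 (Filter.Eventually.of_forall hptE))
        _ = (∫⁻ x in ball (0 : EuclideanSpace ℝ (Fin n)) (1/2) \ ball 0 (1/4),
              ENNReal.ofReal 8 * Pb (((2:ℝ)⁻¹) • x))
            + ∫⁻ x in ball (0 : EuclideanSpace ℝ (Fin n)) (1/2) \ ball 0 (1/4),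
              ENNReal.ofReal ((16:ℝ)⁻¹) * ∫⁻ t in Set.Ioc (2⁻¹:ℝ) 1, Qb (t • x) :=
            lintegral_add_left hf1meas _
        _ = _ := by
            rw [lintegral_const_mul' _ _ ENNReal.ofReal_ne_top,
              lintegral_const_mul' _ _ ENNReal.ofReal_ne_top]
    have hpre1 : ball (0 : EuclideanSpace ℝ (Fin n)) (1/2) \ ball 0 (1/4)
        = (fun x : EuclideanSpace ℝ (Fin n) => ((2:ℝ)⁻¹) • x) ⁻¹'
            (ball 0 (1/4) \ ball 0 (1/8)) := by
      ext z
      simp only [Set.mem_preimage, Set.mem_diff, mem_ball_zero_iff, norm_smul,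
        Real.norm_eq_abs]
      rw [abs_of_pos (by norm_num : (0:ℝ) < 2⁻¹)]
      constructor
      · rintro ⟨h1, h2⟩
        exact ⟨by linarith, fun h => h2 (by linarith)⟩
      · rintro ⟨h1, h2⟩
        exact ⟨by linarith, fun h => h2 (by linarith)⟩
    have hT1 : (∫⁻ x in ball (0 : EuclideanSpace ℝ (Fin n)) (1/2) \ ball 0 (1/4),
          Pb (((2:ℝ)⁻¹) • x))
        ≤ ENNReal.ofReal ((2:ℝ)^n)
          * ∫⁻ y in ball (0 : EuclideanSpace ℝ (Fin n)) (1/4), Pb y := by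
      rw [hpre1, stmt12_setLint_comp_smul volume hPbmeas (by norm_num : ((2:ℝ)⁻¹) ≠ 0) msD48,
        finrank_euclideanSpace_fin]
      refine mul_le_mul' (le_of_eq ?_) (lintegral_mono' (Measure.restrict_mono Set.diff_subset le_rfl) le_rfl)
      congr 1
      rw [inv_pow, inv_inv, abs_of_pos (by positivity)]
    have huncurry : Measurable (Function.uncurry
        fun (x : EuclideanSpace ℝ (Fin n)) (t : ℝ) => Qb (t • x)) :=
      hQbmeas.comp (continuous_snd.smul continuous_fst).measurable
    have hT2swap : (∫⁻ x in ball (0 : EuclideanSpace ℝ (Fin n)) (1/2) \ ball 0 (1/4),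
          ∫⁻ t in Set.Ioc (2⁻¹:ℝ) 1, Qb (t • x))
        = ∫⁻ t in Set.Ioc (2⁻¹:ℝ) 1,
            ∫⁻ x in ball (0 : EuclideanSpace ℝ (Fin n)) (1/2) \ ball 0 (1/4), Qb (t • x) :=
      lintegral_lintegral_swap huncurry.aemeasurable
    have hT2inner : ∀ t ∈ Set.Ioc (2⁻¹:ℝ) 1,
        (∫⁻ x in ball (0 : EuclideanSpace ℝ (Fin n)) (1/2) \ ball 0 (1/4), Qb (t • x))
          ≤ ENNReal.ofReal ((2:ℝ)^n)
            * ∫⁻ y in ball (0 : EuclideanSpace ℝ (Fin n)) (1/2) \ ball 0 (1/8), Qb y := by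
      intro t ht
      have ht0 : (0:ℝ) < t := lt_trans (by norm_num) ht.1
      have hpre : ball (0 : EuclideanSpace ℝ (Fin n)) (1/2) \ ball 0 (1/4)
          = (fun x : EuclideanSpace ℝ (Fin n) => t • x) ⁻¹'
              (ball 0 (t * (1/2)) \ ball 0 (t * (1/4))) := by
        ext z
        simp only [Set.mem_preimage, Set.mem_diff, mem_ball_zero_iff, norm_smul,
          Real.norm_eq_abs]
        rw [abs_of_pos ht0]
        constructor
        · rintro ⟨h1, h2⟩
          refine ⟨by nlinarith, fun h => h2 ?_⟩
          nlinarith [(mul_lt_mul_iff_right₀ ht0).1 h]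
        · rintro ⟨h1, h2⟩
          refine ⟨by nlinarith [(mul_lt_mul_iff_right₀ ht0).1 h1], fun h => h2 ?_⟩
          nlinarith
      rw [hpre, stmt12_setLint_comp_smul volume hQbmeas ht0.ne' 
        (measurableSet_ball.diff measurableSet_ball), finrank_euclideanSpace_fin]
      refine mul_le_mul' (ENNReal.ofReal_le_ofReal ?_) 
        (lintegral_mono' (Measure.restrict_mono ?_ le_rfl) le_rfl)
      · rw [abs_of_pos (by positivity)]
        have h2t : ((2:ℝ)⁻¹)^n ≤ t^n := pow_le_pow_left₀ (by norm_num) ht.1.le n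
        calc (t^n)⁻¹ ≤ (((2:ℝ)⁻¹)^n)⁻¹ := by
              apply inv_anti₀ (by positivity) h2t
          _ = (2:ℝ)^n := by rw [inv_pow, inv_inv]
      · refine Set.diff_subset_diff (ball_subset_ball (by nlinarith [ht.2]))
          (ball_subset_ball (by nlinarith [ht.1]))
    have hT2 : (∫⁻ x in ball (0 : EuclideanSpace ℝ (Fin n)) (1/2) \ ball 0 (1/4),
          ∫⁻ t in Set.Ioc (2⁻¹:ℝ) 1, Qb (t • x))
        ≤ ENNReal.ofReal ((2:ℝ)^n)
          * ∫⁻ y in ball (0 : EuclideanSpace ℝ (Fin n)) (1/2) \ ball 0 (1/8), Qb y := by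
      rw [hT2swap]
      calc (∫⁻ t in Set.Ioc (2⁻¹:ℝ) 1,
            ∫⁻ x in ball (0 : EuclideanSpace ℝ (Fin n)) (1/2) \ ball 0 (1/4), Qb (t • x))
          ≤ ∫⁻ _ in Set.Ioc (2⁻¹:ℝ) 1, (ENNReal.ofReal ((2:ℝ)^n)
              * ∫⁻ y in ball (0 : EuclideanSpace ℝ (Fin n)) (1/2) \ ball 0 (1/8), Qb y) :=
            lintegral_mono_ae ((ae_restrict_iff' measurableSet_Ioc).2
              (Filter.Eventually.of_forall hT2inner))
        _ = (ENNReal.ofReal ((2:ℝ)^n)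
              * ∫⁻ y in ball (0 : EuclideanSpace ℝ (Fin n)) (1/2) \ ball 0 (1/8), Qb y)
            * volume (Set.Ioc (2⁻¹:ℝ) 1) := setLIntegral_const _ _
        _ ≤ (ENNReal.ofReal ((2:ℝ)^n)
              * ∫⁻ y in ball (0 : EuclideanSpace ℝ (Fin n)) (1/2) \ ball 0 (1/8), Qb y)
            * 1 := by
            refine mul_le_mul_right ?_ _
            rw [Real.volume_Ioc]
            refine ENNReal.ofReal_le_one.2 (by norm_num)
        _ = _ := mul_one _
    -- combine everything
    have c1 : 1 + ENNReal.ofReal 8 * ENNReal.ofReal ((2:ℝ)^n)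
        ≤ ENNReal.ofReal (2 ^ (n + 3) + 1) := by
      rw [← ENNReal.ofReal_mul (by norm_num : (0:ℝ) ≤ 8), ← ENNReal.ofReal_one,
        ← ENNReal.ofReal_add (by norm_num) (by positivity)]
      refine ENNReal.ofReal_le_ofReal ?_
      rw [pow_add]
      ring_nf
      nlinarith [pow_pos (by norm_num : (0:ℝ) < 2) n]
    have c2 : ENNReal.ofReal ((16:ℝ)⁻¹) * ENNReal.ofReal ((2:ℝ)^n)
        ≤ ENNReal.ofReal (2 ^ (n + 3) + 1) := by
      rw [← ENNReal.ofReal_mul (by norm_num)]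
      refine ENNReal.ofReal_le_ofReal ?_
      rw [pow_add]
      nlinarith [pow_pos (by norm_num : (0:ℝ) < 2) n]
    calc (∫⁻ x in ball (0 : EuclideanSpace ℝ (Fin n)) (1/2), Pb x)
        = (∫⁻ x in ball (0 : EuclideanSpace ℝ (Fin n)) (1/4), Pb x)
          + ∫⁻ x in ball (0 : EuclideanSpace ℝ (Fin n)) (1/2) \ ball 0 (1/4), Pb x :=
          hsplit
      _ ≤ (∫⁻ x in ball (0 : EuclideanSpace ℝ (Fin n)) (1/4), Pb x)
          + (ENNReal.ofReal 8 * (ENNReal.ofReal ((2:ℝ)^n)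
              * ∫⁻ y in ball (0 : EuclideanSpace ℝ (Fin n)) (1/4), Pb y)
            + ENNReal.ofReal ((16:ℝ)⁻¹) * (ENNReal.ofReal ((2:ℝ)^n)
              * ∫⁻ y in ball (0 : EuclideanSpace ℝ (Fin n)) (1/2) \ ball 0 (1/8), Qb y)) := by
          refine add_le_add_right (hstep1.trans (add_le_add ?_ ?_)) _
          · exact mul_le_mul_right hT1 _
          · exact mul_le_mul_right hT2 _
      _ = (1 + ENNReal.ofReal 8 * ENNReal.ofReal ((2:ℝ)^n))
            * (∫⁻ x in ball (0 : EuclideanSpace ℝ (Fin n)) (1/4), Pb x)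
          + (ENNReal.ofReal ((16:ℝ)⁻¹) * ENNReal.ofReal ((2:ℝ)^n))
            * (∫⁻ y in ball (0 : EuclideanSpace ℝ (Fin n)) (1/2) \ ball 0 (1/8), Qb y) := by
          ring
      _ ≤ ENNReal.ofReal (2 ^ (n + 3) + 1)
            * (∫⁻ x in ball (0 : EuclideanSpace ℝ (Fin n)) (1/4), Pb x)
          + ENNReal.ofReal (2 ^ (n + 3) + 1)
            * (∫⁻ y in ball (0 : EuclideanSpace ℝ (Fin n)) (1/2) \ ball 0 (1/8), Qb y) :=
          add_le_add (mul_le_mul_left c1 _) (mul_le_mul_left c2 _)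
  -- the statement integrand agrees with ‖G y‖² on the annulus
  have hAnnU : ball (0 : EuclideanSpace ℝ (Fin n)) (1/2) \ ball 0 (1/8) ⊆ U := by
    rintro y ⟨hy1, hy2⟩
    refine ⟨hy1, fun h0 => hy2 ?_⟩
    rw [mem_singleton_iff] at h0
    subst h0
    exact mem_ball_self (by norm_num)
  have hAnnEq : ∀ y ∈ ball (0 : EuclideanSpace ℝ (Fin n)) (1/2) \ ball 0 (1/8),
      (norm (deriv (fun t : ℝ => t⁻¹ • w (t • (‖y‖⁻¹ • y))) ‖y‖))^2 = ‖G y‖^2 := by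
    intro y hy
    rw [(hGderiv y (hAnnU hy)).deriv]
  -- boundedness of G on the annulus
  have hGbdd : ∃ M : ℝ, 0 ≤ M ∧
      ∀ y ∈ ball (0 : EuclideanSpace ℝ (Fin n)) (1/2) \ ball 0 (1/8), ‖G y‖^2 ≤ M := by
    set K : Set (EuclideanSpace ℝ (Fin n)) := closedBall 0 (1/2) \ ball 0 (1/8) with hKdef
    have hKcomp : IsCompact K := (isCompact_closedBall _ _).diff isOpen_ball
    have hKsub : K ⊆ closedBall (0 : EuclideanSpace ℝ (Fin n)) (1/2) \ {0} := by
      rintro y ⟨hy1, hy2⟩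
      refine ⟨hy1, fun h0 => hy2 ?_⟩
      rw [mem_singleton_iff] at h0
      subst h0
      exact mem_ball_self (by norm_num)
    -- local Lipschitz bound on the fderiv near every point of K
    have hloc : ∀ x ∈ K, ∃ V : Set (EuclideanSpace ℝ (Fin n)), IsOpen V ∧ x ∈ V ∧
        ∃ Mx : ℝ, ∀ y ∈ V ∩ U, ‖fderiv ℝ w y‖ ≤ Mx := by
      intro x hx
      have hx8 : 1/8 ≤ ‖x‖ := by
        have := hx.2
        rw [mem_ball_zero_iff, not_lt] at this
        exact this
      have hxs : x ∈ closedBall (0 : EuclideanSpace ℝ (Fin n)) (1/2) \ {0} := hKsub hx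
      have hs'sub : closedBall (0 : EuclideanSpace ℝ (Fin n)) (1/2) ∩ closedBall x (1/16)
          ⊆ closedBall 0 (1/2) \ {0} := by
        rintro y ⟨hy1, hy2⟩
        refine ⟨hy1, fun h0 => ?_⟩
        rw [mem_singleton_iff] at h0
        subst h0
        rw [mem_closedBall, dist_zero_left] at hy2
        linarith
      have hcd : ContDiffWithinAt ℝ 1 w
          (closedBall (0 : EuclideanSpace ℝ (Fin n)) (1/2) ∩ closedBall x (1/16)) x :=
        (hw x hxs).mono hs'sub
      obtain ⟨K₀, tt, htt, hlip⟩ := hcd.exists_lipschitzOnWith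
        ((convex_closedBall _ _).inter (convex_closedBall _ _))
      rw [mem_nhdsWithin] at htt
      obtain ⟨Vo, hVoo, hxVo, hVsub⟩ := htt
      refine ⟨Vo ∩ ball x (1/16), hVoo.inter isOpen_ball,
        ⟨hxVo, mem_ball_self (by norm_num)⟩, (K₀:ℝ), ?_⟩
      rintro y ⟨⟨hyVo, hyb⟩, hyU⟩
      have hO : (Vo ∩ ball x (1/16) ∩ ball (0 : EuclideanSpace ℝ (Fin n)) (1/2)) ∈ 𝓝 y :=
        ((hVoo.inter isOpen_ball).inter isOpen_ball).mem_nhds ⟨⟨hyVo, hyb⟩, hyU.1⟩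
      have hOsub : Vo ∩ ball x (1/16) ∩ ball (0 : EuclideanSpace ℝ (Fin n)) (1/2) ⊆ tt := by
        rintro z ⟨⟨h1, h2⟩, h3⟩
        exact hVsub ⟨h1, ball_subset_closedBall h3, ball_subset_closedBall h2⟩
      exact norm_fderiv_le_of_lipschitzOn ℝ hO (hlip.mono hOsub)
    have hloc' : ∀ i : {x : EuclideanSpace ℝ (Fin n) // x ∈ K},
        ∃ V : Set (EuclideanSpace ℝ (Fin n)), IsOpen V ∧ i.1 ∈ V ∧
          ∃ Mx : ℝ, ∀ y ∈ V ∩ U, ‖fderiv ℝ w y‖ ≤ Mx := fun i => hloc i.1 i.2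
    choose V hVo hVx Mx hMx using hloc'
    obtain ⟨t, ht⟩ := hKcomp.elim_finite_subcover V hVo
      (fun x hx => Set.mem_iUnion.2 ⟨⟨x, hx⟩, hVx _⟩)
    obtain ⟨M₂, hM₂⟩ := hKcomp.exists_bound_of_continuousOn (hw.continuousOn.mono hKsub)
    set M₁ : ℝ := ∑ i ∈ t, max (Mx i) 0 with hM₁def
    have hM₁nonneg : 0 ≤ M₁ := Finset.sum_nonneg fun j _ => le_max_right _ _
    have hM₁ : ∀ y ∈ ball (0 : EuclideanSpace ℝ (Fin n)) (1/2) \ ball 0 (1/8),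
        ‖fderiv ℝ w y‖ ≤ M₁ := by
      intro y hy
      have hyK : y ∈ K := ⟨ball_subset_closedBall hy.1, hy.2⟩
      obtain ⟨i, hit, hyV⟩ := Set.mem_iUnion₂.1 (ht hyK)
      calc ‖fderiv ℝ w y‖ ≤ Mx i := hMx i y ⟨hyV, hAnnU hy⟩
        _ ≤ max (Mx i) 0 := le_max_left _ _
        _ ≤ M₁ := Finset.single_le_sum (fun j _ => le_max_right (Mx j) 0) hit
    set Mg : ℝ := 64 * (M₁ + max M₂ 0) with hMgdef
    have hMgnonneg : 0 ≤ Mg := by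
      have := le_max_right M₂ (0:ℝ)
      nlinarith [le_max_right M₂ (0:ℝ), hM₁nonneg]
    refine ⟨Mg^2, by positivity, ?_⟩
    intro y hy
    have hy8 : 1/8 ≤ ‖y‖ := by
      have := hy.2
      rw [mem_ball_zero_iff, not_lt] at this
      exact this
    have hy2 : ‖y‖ < 1/2 := mem_ball_zero_iff.1 hy.1
    have hyK : y ∈ K := ⟨ball_subset_closedBall hy.1, hy.2⟩
    have hGy : ‖G y‖ ≤ Mg := by
      have hnorm : ‖G y‖ = (‖y‖^2)⁻¹ * ‖(fderiv ℝ w y) y - w y‖ := by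
        rw [hGdef]
        rw [norm_smul, Real.norm_eq_abs, abs_of_nonneg (by positivity)]
      have hL : ‖(fderiv ℝ w y) y‖ ≤ M₁ := by
        calc ‖(fderiv ℝ w y) y‖ ≤ ‖fderiv ℝ w y‖ * ‖y‖ := (fderiv ℝ w y).le_opNorm y
          _ ≤ M₁ * 1 := by
              refine mul_le_mul (hM₁ y hy) (by linarith) (norm_nonneg _) hM₁nonneg
          _ = M₁ := mul_one _
      have hwy : ‖w y‖ ≤ max M₂ 0 := le_trans (hM₂ y hyK) (le_max_left _ _)
      have htri : ‖(fderiv ℝ w y) y - w y‖ ≤ M₁ + max M₂ 0 :=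
        (norm_sub_le _ _).trans (add_le_add hL hwy)
      have hinv : (‖y‖^2)⁻¹ ≤ 64 := by
        have h1 : (1:ℝ)/64 ≤ ‖y‖^2 := by nlinarith
        rw [inv_le_comm₀ (by nlinarith) (by norm_num)]
        linarith
      rw [hnorm, hMgdef]
      have h0 : 0 ≤ (‖y‖^2)⁻¹ := by positivity
      nlinarith [norm_nonneg ((fderiv ℝ w y) y - w y)]
    nlinarith [norm_nonneg (G y), hGy]
  -- case split on integrability
  by_cases hInt : IntegrableOn (fun x => ‖w x - ψ x‖^2)
      (ball (0 : EuclideanSpace ℝ (Fin n)) (1/2)) volume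
  · obtain ⟨Mg, hMg0, hMg⟩ := hGbdd
    have msB2 : MeasurableSet (ball (0 : EuclideanSpace ℝ (Fin n)) (1/2)) := measurableSet_ball
    have msAnn : MeasurableSet
        (ball (0 : EuclideanSpace ℝ (Fin n)) (1/2) \ ball 0 (1/8)) :=
      measurableSet_ball.diff measurableSet_ball
    have hae0 : ∀ᵐ x ∂(volume : Measure (EuclideanSpace ℝ (Fin n))), x ≠ 0 := by
      have h0 : (volume : Measure (EuclideanSpace ℝ (Fin n))) {0} = 0 := measure_singleton 0
      rw [ae_iff]
      convert h0 using 2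
      ext x; simp
    have h1 : ENNReal.ofReal
          (∫ x in ball (0 : EuclideanSpace ℝ (Fin n)) (1/2), ‖w x - ψ x‖^2)
        = ∫⁻ x in ball (0 : EuclideanSpace ℝ (Fin n)) (1/2), Pb x := by
      rw [MeasureTheory.ofReal_integral_eq_lintegral_ofReal hInt
        (Filter.Eventually.of_forall fun x => by positivity)]
      refine lintegral_congr_ae ?_
      filter_upwards [ae_restrict_mem msB2, ae_restrict_of_ae hae0] with x hxmem hx0
      rw [hPbdef, Set.indicator_of_mem (show x ∈ U from ⟨hxmem, hx0⟩)]
    have hInt4 : IntegrableOn (fun x => ‖w x - ψ x‖^2)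
        (ball (0 : EuclideanSpace ℝ (Fin n)) (1/4)) volume :=
      hInt.mono_set (ball_subset_ball (by norm_num))
    have h2 : ENNReal.ofReal
          (∫ x in ball (0 : EuclideanSpace ℝ (Fin n)) (1/4), ‖w x - ψ x‖^2)
        = ∫⁻ x in ball (0 : EuclideanSpace ℝ (Fin n)) (1/4), Pb x := by
      rw [MeasureTheory.ofReal_integral_eq_lintegral_ofReal hInt4
        (Filter.Eventually.of_forall fun x => by positivity)]
      refine lintegral_congr_ae ?_
      filter_upwards [ae_restrict_mem measurableSet_ball, ae_restrict_of_ae hae0]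
        with x hxmem hx0
      rw [hPbdef, Set.indicator_of_mem
        (show x ∈ U from ⟨ball_subset_ball (by norm_num) hxmem, hx0⟩)]
    have hGcAnn : ContinuousOn (fun y => ‖G y‖^2)
        (ball (0 : EuclideanSpace ℝ (Fin n)) (1/2) \ ball 0 (1/8)) :=
      ((hGc.mono hAnnU).norm.pow 2)
    have hGint : IntegrableOn (fun y => ‖G y‖^2)
        (ball (0 : EuclideanSpace ℝ (Fin n)) (1/2) \ ball 0 (1/8)) volume := by
      refine ⟨hGcAnn.aestronglyMeasurable msAnn, ?_⟩
      refine MeasureTheory.HasFiniteIntegral.restrict_of_bounded (C := Mg) ?_ ?_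
      · exact lt_of_le_of_lt (measure_mono Set.diff_subset) measure_ball_lt_top
      · rw [ae_restrict_iff' msAnn]
        refine Filter.Eventually.of_forall fun y hy => ?_
        rw [Real.norm_eq_abs, abs_of_nonneg (by positivity)]
        exact hMg y hy
    have h3eq : (∫ y in ball (0 : EuclideanSpace ℝ (Fin n)) (1/2) \ ball 0 (1/8),
          norm (deriv (fun t : ℝ => t⁻¹ • w (t • (‖y‖⁻¹ • y))) ‖y‖) ^ 2)
        = ∫ y in ball (0 : EuclideanSpace ℝ (Fin n)) (1/2) \ ball 0 (1/8), ‖G y‖^2 :=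
      setIntegral_congr_fun msAnn (fun y hy => hAnnEq y hy)
    have h3 : ENNReal.ofReal
          (∫ y in ball (0 : EuclideanSpace ℝ (Fin n)) (1/2) \ ball 0 (1/8),
            norm (deriv (fun t : ℝ => t⁻¹ • w (t • (‖y‖⁻¹ • y))) ‖y‖) ^ 2)
        = ∫⁻ y in ball (0 : EuclideanSpace ℝ (Fin n)) (1/2) \ ball 0 (1/8), Qb y := by
      rw [h3eq, MeasureTheory.ofReal_integral_eq_lintegral_ofReal hGint
        (Filter.Eventually.of_forall fun y => by positivity)]
      refine lintegral_congr_ae ?_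
      filter_upwards [ae_restrict_mem msAnn] with y hy
      rw [hQbdef, Set.indicator_of_mem (hAnnU hy)]
    have hfinal := hmain
    rw [← h1, ← h2, ← h3] at hfinal
    have hb4 : 0 ≤ ∫ x in ball (0 : EuclideanSpace ℝ (Fin n)) (1/4), ‖w x - ψ x‖^2 :=
      integral_nonneg fun x => by positivity
    have hbAnn : 0 ≤ ∫ y in ball (0 : EuclideanSpace ℝ (Fin n)) (1/2) \ ball 0 (1/8),
        norm (deriv (fun t : ℝ => t⁻¹ • w (t • (‖y‖⁻¹ • y))) ‖y‖) ^ 2 :=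
      integral_nonneg fun x => by positivity
    have hCr : (0:ℝ) ≤ 2^(n+3) + 1 := by positivity
    rw [← ENNReal.ofReal_mul hCr, ← ENNReal.ofReal_mul hCr,
      ← ENNReal.ofReal_add (mul_nonneg hCr hb4) (mul_nonneg hCr hbAnn)] at hfinal
    exact (ENNReal.ofReal_le_ofReal_iff
      (add_nonneg (mul_nonneg hCr hb4) (mul_nonneg hCr hbAnn))).1 hfinal
  · rw [MeasureTheory.integral_undef hInt]
    have h1 : 0 ≤ ∫ x in ball (0 : EuclideanSpace ℝ (Fin n)) (1/4), ‖w x - ψ x‖ ^ 2 :=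
      MeasureTheory.integral_nonneg fun x => by positivity
    have h2 : 0 ≤ ∫ x in ball (0 : EuclideanSpace ℝ (Fin n)) (1/2) \ ball 0 (1/8),
        norm (deriv (fun t : ℝ => t⁻¹ • w (t • (‖x‖⁻¹ • x))) ‖x‖) ^ 2 :=
      MeasureTheory.integral_nonneg fun x => by positivity
    have hC : (0:ℝ) ≤ 2 ^ (n + 3) + 1 := by positivity
    nlinarith
end
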